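/- arXiv:math/0504460 — 3 statements merged into one kernel-verified Lean document; each statement's English description precedes it below -/
import Mathlib

section
/- Let F be a field, let z, w ∈ F be units, and let μ be a partition such that z^{2h(x)} ≠ 1 for every cell x ∈ μ. With W_μ(z, w) = ∏_{x∈μ} (w^{−1} z^{c(x)} − w z^{−c(x)}) / (z^{h(x)} − z^{−h(x)}) (the quantum dimension with q = z², e^{−t} = w²), one has W_{μ^t}(z^{−1}, w) = W_{μ^t}(z, w^{−1}) = (−1)^{|μ|} W_μ(z, w), where μ^t is the conjugate partition. -/
/-- A partition `μ = (μ_1 ≥ μ_2 ≥ …)`: a weakly decreasing, eventually zero sequence of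
naturals.  We index parts from `0`, so `part i` is the part `μ_{i+1}` of the paper. -/
structure Partition' where
  part : ℕ → ℕ
  antitone' : ∀ ⦃i j : ℕ⦄, i ≤ j → part j ≤ part i
  eventually_zero : ∃ N, ∀ n, N ≤ n → part n = 0

namespace Partition'

/-- The Young diagram of `μ`, as a set of (0-indexed) cells `(i, j)`, `j < μ_{i+1}`. -/
def cellsSet (μ : Partition') : Set (ℕ × ℕ) := {x | x.2 < μ.part x.1}

lemma cellsSet_finite (μ : Partition') : μ.cellsSet.Finite := by
  obtain ⟨N, hN⟩ := μ.eventually_zero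
  have hsub : μ.cellsSet ⊆ Set.Iio N ×ˢ Set.Iio (μ.part 0) := by
    rintro ⟨i, j⟩ hx
    have hj : j < μ.part i := hx
    refine Set.mem_prod.mpr ⟨?_, ?_⟩
    · by_contra h
      try push_neg at h
      simp only [Set.mem_Iio, not_lt] at h
      rw [hN i h] at hj
      omega
    · exact Set.mem_Iio.mpr (lt_of_lt_of_le hj (μ.antitone' (Nat.zero_le i)))
  exact ((Set.finite_Iio N).prod (Set.finite_Iio (μ.part 0))).subset hsub

/-- The cells of the Young diagram of `μ`, as a finite set. -/
noncomputable def cells (μ : Partition') : Finset (ℕ × ℕ) := μ.cellsSet_finite.toFinset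

/-- `|μ|`, the size (number of cells, i.e. sum of the parts) of `μ`. -/
noncomputable def size (μ : Partition') : ℕ := μ.cells.card

lemma row_finite (μ : Partition') (j : ℕ) : {i : ℕ | j < μ.part i}.Finite := by
  obtain ⟨N, hN⟩ := μ.eventually_zero
  apply (Set.finite_Iio N).subset
  intro i hi
  simp only [Set.mem_setOf_eq] at hi
  simp only [Set.mem_Iio]
  by_contra h
  push_neg at h
  rw [hN i h] at hi
  omega

/-- The conjugate (transposed) partition `μ^t`: `(μ^t)_{j+1} = #{i : μ_{i+1} > j}`. -/
noncomputable def conj (μ : Partition') : Partition' where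
  part j := Nat.card {i : ℕ | j < μ.part i}
  antitone' := by
    intro j k hjk
    exact Nat.card_mono (μ.row_finite j) (fun i hi => lt_of_le_of_lt hjk hi)
  eventually_zero := by
    refine ⟨μ.part 0, fun j hj => ?_⟩
    have h : {i : ℕ | j < μ.part i} = (∅ : Set ℕ) := by
      ext i
      simp only [Set.mem_setOf_eq, Set.mem_empty_iff_false, iff_false, not_lt]
      exact le_trans (μ.antitone' (Nat.zero_le i)) hj
    try simp only []
    rw [h]
    simp

/-- The content `c(x) = j - i` of a (0-indexed) cell `x = (i,j)`. -/
def content (x : ℕ × ℕ) : ℤ := (x.2 : ℤ) - (x.1 : ℤ)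

/-- The hook length `h(x) = μ_i + (μ^t)_j - i - j + 1` (1-indexed) of a cell of `μ`,
as an integer. -/
noncomputable def hook (μ : Partition') (x : ℕ × ℕ) : ℤ :=
  (μ.part x.1 : ℤ) + (μ.conj.part x.2 : ℤ) - (x.1 : ℤ) - (x.2 : ℤ) - 1

/-- `n(μ) = Σ_i (i-1) μ_i` (1-indexed), i.e. `Σ_i i * μ_{i+1}` (0-indexed). -/
noncomputable def nstat (μ : Partition') : ℕ := ∑ᶠ i : ℕ, i * μ.part i

/-- The empty partition. -/
def empty : Partition' := ⟨fun _ => 0, fun _ _ _ => le_rfl, ⟨0, fun _ _ => rfl⟩⟩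

/-- The number of (nonzero) parts of `μ`. -/
noncomputable def length (μ : Partition') : ℕ := μ.conj.part 0

end Partition'

/-- The quantum dimension `W_μ(z, w)` (the large-`N` Chern–Simons invariant of the unknot,
written with `q = z²` and `e^{−t} = w²`):
`W_μ(z,w) = ∏_{x∈μ} (w⁻¹ z^{c(x)} − w z^{−c(x)}) / (z^{h(x)} − z^{−h(x)})`. -/
noncomputable def Wdim {F : Type*} [Field F] (μ : Partition') (z w : F) : F :=
  ∏ x ∈ μ.cells, (w⁻¹ * z ^ Partition'.content x - w * z ^ (-Partition'.content x)) /
    (z ^ μ.hook x - z ^ (-μ.hook x))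

namespace Partition'

lemma mem_cells {μ : Partition'} {x : ℕ × ℕ} : x ∈ μ.cells ↔ x.2 < μ.part x.1 := by
  simp [cells, cellsSet, Set.Finite.mem_toFinset]

lemma mem_lowerset_iff_lt_card {T : Finset ℕ}
    (h : ∀ a b : ℕ, a ≤ b → b ∈ T → a ∈ T) (k : ℕ) : k ∈ T ↔ k < T.card := by
  constructor
  · intro hk
    have hsub : Finset.range (k + 1) ⊆ T := by
      intro m hm
      exact h m k (by simpa using Nat.lt_succ_iff.mp (Finset.mem_range.mp hm)) hk
    have := Finset.card_le_card hsub
    simpa using this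
  · intro hk
    by_contra hkT
    have hsub : T ⊆ Finset.range k := by
      intro b hb
      rw [Finset.mem_range]
      by_contra hbk
      exact hkT (h k b (le_of_not_gt hbk) hb)
    have := Finset.card_le_card hsub
    simp only [Finset.card_range] at this
    omega

lemma conj_part_lt_iff (μ : Partition') (i j : ℕ) :
    i < μ.conj.part j ↔ j < μ.part i := by
  have hfin := μ.row_finite j
  have hcard : μ.conj.part j = hfin.toFinset.card := by
    show Nat.card {i : ℕ | j < μ.part i} = _
    rw [Nat.card_coe_set_eq, Set.ncard_eq_toFinset_card _ hfin]
  have hlow : ∀ a b : ℕ, a ≤ b → b ∈ hfin.toFinset → a ∈ hfin.toFinset := by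
    intro a b hab hb
    simp only [Set.Finite.mem_toFinset, Set.mem_setOf_eq] at hb ⊢
    exact lt_of_lt_of_le hb (μ.antitone' hab)
  rw [hcard, ← mem_lowerset_iff_lt_card hlow]
  simp [Set.Finite.mem_toFinset]

lemma conj_conj_part (μ : Partition') (i : ℕ) : μ.conj.conj.part i = μ.part i := by
  have : {j : ℕ | i < μ.conj.part j} = Set.Iio (μ.part i) := by
    ext j
    simp [Set.mem_Iio, conj_part_lt_iff]
  show Nat.card {j : ℕ | i < μ.conj.part j} = μ.part i
  rw [this]
  simp

lemma mem_cells_swap {μ : Partition'} {x : ℕ × ℕ} :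
    x.swap ∈ μ.conj.cells ↔ x ∈ μ.cells := by
  simp only [mem_cells, Prod.swap]
  exact μ.conj_part_lt_iff x.1 x.2

lemma hook_swap (μ : Partition') (x : ℕ × ℕ) :
    μ.conj.hook x.swap = μ.hook x := by
  simp only [hook, Prod.swap, conj_conj_part]
  ring

lemma content_swap (x : ℕ × ℕ) : content x.swap = -content x := by
  simp [content, Prod.swap]

end Partition'

lemma Wdim_conj_eq {F : Type*} [Field F] (μ : Partition') (z w : F)
    (f : ℕ × ℕ → F)
    (hf : ∀ x ∈ μ.cells,
      f x = -((w⁻¹ * z ^ Partition'.content x - w * z ^ (-Partition'.content x)) /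
        (z ^ μ.hook x - z ^ (-μ.hook x)))) :
    ∏ x ∈ μ.conj.cells, f x.swap = (-1 : F) ^ μ.size * Wdim μ z w := by
  have hprod : ∏ x ∈ μ.conj.cells, f x.swap = ∏ x ∈ μ.cells, f x := by
    refine Finset.prod_nbij' Prod.swap Prod.swap ?_ ?_ ?_ ?_ ?_
    · intro x hx
      exact Partition'.mem_cells_swap.mp (by rw [Prod.swap_swap]; exact hx)
    · intro x hx; exact Partition'.mem_cells_swap.mpr hx
    · intro x _; simp
    · intro x _; simp
    · intro x _; rfl
  rw [hprod, Finset.prod_congr rfl hf,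
    Finset.prod_congr rfl (fun x _ => (neg_one_mul _).symm : ∀ x ∈ μ.cells, _),
    Finset.prod_mul_distrib, Finset.prod_const]
  rfl

/-- Equation (30) of Proposition 4.1: `W_{μᵗ}(z⁻¹, w) = W_{μᵗ}(z, w⁻¹) = (−1)^{|μ|} W_μ(z, w)`. -/
theorem quantum_dimension_conj_symmetry {F : Type*} [Field F] (z w : F)
    (hz : z ≠ 0) (hw : w ≠ 0) (μ : Partition')
    (hroot : ∀ x ∈ μ.cells, z ^ (2 * μ.hook x) ≠ 1) :
    Wdim μ.conj z⁻¹ w = Wdim μ.conj z w⁻¹ ∧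
    Wdim μ.conj z w⁻¹ = (-1 : F) ^ μ.size * Wdim μ z w := by
  have h2 : Wdim μ.conj z w⁻¹ = (-1 : F) ^ μ.size * Wdim μ z w := by
    rw [Wdim]
    have := Wdim_conj_eq μ z w
      (fun x => ((w⁻¹)⁻¹ * z ^ Partition'.content x.swap
          - w⁻¹ * z ^ (-Partition'.content x.swap)) /
        (z ^ μ.conj.hook x.swap - z ^ (-μ.conj.hook x.swap)))
      (by
        intro x _
        simp only [Partition'.content_swap, Partition'.hook_swap, Prod.swap_swap, inv_inv,
          neg_neg]
        rw [← neg_div, neg_sub])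
    simp only [Prod.swap_swap] at this
    exact this
  have h1 : Wdim μ.conj z⁻¹ w = (-1 : F) ^ μ.size * Wdim μ z w := by
    rw [Wdim]
    have := Wdim_conj_eq μ z w
      (fun x => (w⁻¹ * z⁻¹ ^ Partition'.content x.swap
          - w * z⁻¹ ^ (-Partition'.content x.swap)) /
        (z⁻¹ ^ μ.conj.hook x.swap - z⁻¹ ^ (-μ.conj.hook x.swap)))
      (by
        intro x _
        simp only [Partition'.content_swap, Partition'.hook_swap, Prod.swap_swap, neg_neg,
          inv_zpow']
        rw [← neg_sub (z ^ μ.hook x), div_neg])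
    simp only [Prod.swap_swap] at this
    exact this
  exact ⟨h1.trans h2.symm, h2⟩
end

section
/- Let μ be a partition and let q ∈ ℂ with 0 < |q| < 1. Then the double series Σ_{i,j≥1} ( q^{μ_i + j − i} − q^{j − i} ) converges absolutely and − Σ_{i,j≥1} ( q^{μ_i + j − i} − q^{j − i} ) = Σ_{(i,j)∈μ} q^{j−i}, the finite sum of q raised to the contents of the cells of μ. -/
/-- Equation (70): for `0 < |q| < 1`, the double series
`Σ_{i,j≥1} (q^{μ_i + j − i} − q^{j−i})` converges absolutely and its negative equals
the content polynomial `f_μ(q) = Σ_{x∈μ} q^{c(x)}`. -/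
theorem content_sum_as_double_series (μ : Partition') (q : ℂ) (h0 : 0 < ‖q‖) (h1 : ‖q‖ < 1) :
    Summable (fun p : ℕ × ℕ =>
      ‖q ^ ((μ.part p.1 : ℤ) + (p.2 : ℤ) - (p.1 : ℤ)) - q ^ ((p.2 : ℤ) - (p.1 : ℤ))‖) ∧
    -∑' p : ℕ × ℕ,
        (q ^ ((μ.part p.1 : ℤ) + (p.2 : ℤ) - (p.1 : ℤ)) - q ^ ((p.2 : ℤ) - (p.1 : ℤ))) =
      ∑ x ∈ μ.cells, q ^ Partition'.content x := by

  have hq : q ≠ 0 := by intro h; simp [h] at h0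
  have hq1 : (1 : ℂ) - q ≠ 0 := by
    intro h
    have : q = 1 := by linear_combination -h
    rw [this] at h1; simp at h1
  have hq1' : q ≠ 1 := by intro h; rw [h] at h1; simp at h1
  obtain ⟨N, hN⟩ := μ.eventually_zero
  set g : ℕ → ℂ := fun i => (q ^ (μ.part i) - 1) * (q ^ (-(i:ℤ))) with hg
  have key : ∀ p : ℕ × ℕ,
      q ^ ((μ.part p.1 : ℤ) + (p.2 : ℤ) - (p.1 : ℤ)) - q ^ ((p.2 : ℤ) - (p.1 : ℤ))
      = g p.1 * q ^ p.2 := by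
    intro p
    simp only [hg, sub_eq_add_neg ((μ.part p.1:ℤ) + (p.2:ℤ)), sub_eq_add_neg ((p.2:ℤ))]
    rw [zpow_add₀ hq, zpow_add₀ hq, zpow_add₀ hq]
    simp only [zpow_natCast]
    ring
  have hg_supp : ∀ i ∉ Finset.range N, g i = 0 := by
    intro i hi
    simp only [Finset.mem_range, not_lt] at hi
    simp [hg, hN i hi]
  have hgnorm : Summable fun i => ‖g i‖ :=
    summable_of_ne_finset_zero (s := Finset.range N) fun i hi => by simp [hg_supp i hi]
  have hqnorm : Summable fun j : ℕ => ‖q ^ j‖ := by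
    simp only [norm_pow]
    exact summable_geometric_of_lt_one (norm_nonneg q) h1
  have hsum : Summable fun p : ℕ × ℕ => ‖g p.1 * q ^ p.2‖ :=
    Summable.mul_norm hgnorm hqnorm
  constructor
  · simpa only [key] using hsum
  · have step1 : (∑' p : ℕ × ℕ,
        (q ^ ((μ.part p.1 : ℤ) + (p.2 : ℤ) - (p.1 : ℤ)) - q ^ ((p.2 : ℤ) - (p.1 : ℤ))))
        = (∑' i : ℕ, g i) * (∑' j : ℕ, q ^ j) := by
      rw [tsum_congr key]
      exact (tsum_mul_tsum_of_summable_norm hgnorm hqnorm).symm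
    rw [step1, tsum_eq_sum hg_supp, tsum_geometric_of_norm_lt_one h1]
    have hcells : μ.cells =
        ((Finset.range N) ×ˢ (Finset.range (μ.part 0))).filter (fun x => x.2 < μ.part x.1) := by
      ext ⟨i, j⟩
      simp only [Partition'.cells, Set.Finite.mem_toFinset, Partition'.cellsSet,
        Set.mem_setOf_eq, Finset.mem_filter, Finset.mem_product, Finset.mem_range]
      constructor
      · intro hj
        refine ⟨⟨?_, lt_of_lt_of_le hj (μ.antitone' (Nat.zero_le i))⟩, hj⟩
        by_contra h
        push_neg at h
        rw [hN i h] at hj; omega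
      · exact fun h => h.2
    rw [hcells, Finset.sum_filter, Finset.sum_product, Finset.sum_mul, ← Finset.sum_neg_distrib]
    refine Finset.sum_congr rfl fun i _ => ?_
    have hrow : (Finset.range (μ.part 0)).filter (fun j => j < μ.part i)
        = Finset.range (μ.part i) := by
      ext j
      simp only [Finset.mem_filter, Finset.mem_range]
      exact ⟨fun h => h.2, fun h => ⟨lt_of_lt_of_le h (μ.antitone' (Nat.zero_le i)), h⟩⟩
    rw [← Finset.sum_filter, hrow]
    have hgeom : ∑ j ∈ Finset.range (μ.part i), q ^ j = (q ^ (μ.part i) - 1) / (q - 1) :=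
      geom_sum_eq hq1' _
    have hcontent : ∀ j : ℕ, q ^ Partition'.content (i, j) = q ^ j * q ^ (-(i:ℤ)) := by
      intro j
      rw [Partition'.content, sub_eq_add_neg, zpow_add₀ hq, zpow_natCast]
    simp only [hcontent]
    rw [← Finset.sum_mul, hgeom]
    simp only [hg]
    rw [show (1:ℂ) - q = -(q - 1) from by ring, inv_neg, div_eq_mul_inv]
    ring
end

section
/- In the ring ℚ[a][[q, Q, Q_m]] of formal power series in q, Q, Q_m with polynomial coefficients in a, the following identity holds: exp( Σ_{n≥1} q^n (1 − a^n)² ( − Q^n − Q_m^n + 2 (Q Q_m)^n ) / ( n (1 − (Q Q_m)^n)(1 − q^n)² ) ) = ∏_{k=0}^∞ ∏_{l=1}^∞ [ ( (1 − Q^{k+1} Q_m^{k} q^{l})(1 − a² Q^{k+1} Q_m^{k} q^{l}) / (1 − a Q^{k+1} Q_m^{k} q^{l})² )^{l} · ( (1 − Q^{k} Q_m^{k+1} q^{l})(1 − a² Q^{k} Q_m^{k+1} q^{l}) / (1 − a Q^{k} Q_m^{k+1} q^{l})² )^{l} · ( (1 − a Q^{k+1} Q_m^{k+1} q^{l})²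 / ( (1 − Q^{k+1} Q_m^{k+1} q^{l})(1 − a² Q^{k+1} Q_m^{k+1} q^{l}) ) )^{2l} ], where 1/(1 − (Q Q_m)^n), 1/(1 − q^n) and the reciprocals of the product factors are expanded as geometric series, and the infinite product converges coefficientwise (each factor is 1 plus terms of positive degree in q and in Q or Q_m). -/
/-- The formal exponential of a multivariate formal power series (intended for series with
zero constant term): coefficientwise, `exp f = Σ_{m≥0} f^m / m!`; for a series with zero
constant term the coefficient at a multidegree `d` only receives contributions from
`m ≤ |d|`, so the sum below is the full exponential. -/
noncomputable def expPS {σ : Type} {R : Type*} [CommRing R] [Algebra ℚ R]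
    (f : MvPowerSeries σ R) : MvPowerSeries σ R :=
  fun d => ∑ m ∈ Finset.range (d.sum (fun _ k => k) + 1),
    (m.factorial : ℚ)⁻¹ • (MvPowerSeries.coeff (R := R) d (f ^ m))

/-- The formal exponential of a one-variable formal power series (intended for series with
zero constant term): coefficientwise, `exp f = Σ_{m≥0} f^m / m!`. -/
noncomputable def expPS1 {R : Type*} [CommRing R] [Algebra ℚ R]
    (f : PowerSeries R) : PowerSeries R :=
  PowerSeries.mk fun k => ∑ m ∈ Finset.range (k + 1),
    (m.factorial : ℚ)⁻¹ • (PowerSeries.coeff (R := R) k (f ^ m))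

/-- The multidegree `q^{i} Q^{j} Q_m^{k}` in `ℚ[a][[q, Q, Q_m]]` (`q` has index `0`,
`Q` index `1`, `Q_m` index `2`). -/
noncomputable def deg3 (i j k : ℕ) : Fin 3 →₀ ℕ :=
  Finsupp.single 0 i + Finsupp.single 1 j + Finsupp.single 2 k

/-- The argument of the exponential in Theorem 6.5: the series
`Σ_{n≥1} qⁿ (1 − aⁿ)² (−Qⁿ − Q_mⁿ + 2(QQ_m)ⁿ) / (n (1 − (QQ_m)ⁿ)(1 − qⁿ)²)`
in `ℚ[a][[q, Q, Q_m]]`, with the geometric expansions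
`1/(1 − (QQ_m)ⁿ) = Σ_{s≥0} (QQ_m)^{ns}` and `qⁿ/(1 − qⁿ)² = Σ_{l≥1} l q^{nl}`. -/
noncomputable def expArg65 : MvPowerSeries (Fin 3) (Polynomial ℚ) :=
  fun d => ∑ᶠ (n : ℕ) (s : ℕ) (l : ℕ),
    if 1 ≤ n ∧ 1 ≤ l then
      (((n : ℚ))⁻¹ * (l : ℚ)) • (((1 - Polynomial.X ^ n) ^ 2 : Polynomial ℚ) *
        ((if d = deg3 (n * l) (n * s + n) (n * s) then (-1 : Polynomial ℚ) else 0) +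
         (if d = deg3 (n * l) (n * s) (n * s + n) then (-1 : Polynomial ℚ) else 0) +
         (if d = deg3 (n * l) (n * s + n) (n * s + n) then (2 : Polynomial ℚ) else 0)))
    else 0

/-- The monomial `c · qˡ Q^{j} Q_m^{k}`. -/
noncomputable def mon3 (l j k : ℕ) (c : Polynomial ℚ) : MvPowerSeries (Fin 3) (Polynomial ℚ) :=
  MvPowerSeries.monomial (R := Polynomial ℚ) (deg3 l j k) c

/-- The `(k, l)`-th factor of the triple infinite product of Theorem 6.5:
`((1−Q^{k+1}Q_m^k qˡ)(1−a²Q^{k+1}Q_m^k qˡ)/(1−aQ^{k+1}Q_m^k qˡ)²)ˡ`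
`· ((1−Q^kQ_m^{k+1} qˡ)(1−a²Q^kQ_m^{k+1} qˡ)/(1−aQ^kQ_m^{k+1} qˡ)²)ˡ`
`· ((1−aQ^{k+1}Q_m^{k+1} qˡ)²/((1−Q^{k+1}Q_m^{k+1} qˡ)(1−a²Q^{k+1}Q_m^{k+1} qˡ)))^{2l}`,
the reciprocals being formal inverses of power series with constant term `1`. -/
noncomputable def factor65 (k l : ℕ) : MvPowerSeries (Fin 3) (Polynomial ℚ) :=
  ((1 - mon3 l (k+1) k 1) * (1 - mon3 l (k+1) k (Polynomial.X ^ 2)) *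
      (MvPowerSeries.invOfUnit (1 - mon3 l (k+1) k Polynomial.X) 1) ^ 2) ^ l *
  ((1 - mon3 l k (k+1) 1) * (1 - mon3 l k (k+1) (Polynomial.X ^ 2)) *
      (MvPowerSeries.invOfUnit (1 - mon3 l k (k+1) Polynomial.X) 1) ^ 2) ^ l *
  ((1 - mon3 l (k+1) (k+1) Polynomial.X) ^ 2 *
      (MvPowerSeries.invOfUnit (1 - mon3 l (k+1) (k+1) 1) 1) *
      (MvPowerSeries.invOfUnit (1 - mon3 l (k+1) (k+1) (Polynomial.X ^ 2)) 1)) ^ (2 * l)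

set_option linter.unusedSectionVars false
set_option linter.unusedVariables false
set_option maxHeartbeats 1000000

section General
open Finset MvPowerSeries
variable {σ : Type} {R : Type*} [CommRing R] [Algebra ℚ R]

lemma degree_eq_sum (d : σ →₀ ℕ) : Finsupp.degree d = d.sum (fun _ k => k) := rfl

lemma coeff_pow_zero_of_lt {f : MvPowerSeries σ R} (hf : constantCoeff f = 0)
    {d : σ →₀ ℕ} {m : ℕ} (h : d.sum (fun _ k => k) < m) :
    MvPowerSeries.coeff (R := R) d (f ^ m) = 0 := by
  apply coeff_eq_zero_of_constantCoeff_nilpotent (m := 1) (by simpa using hf)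
  rw [← degree_eq_sum] at h; omega

lemma coeff_expPS {f : MvPowerSeries σ R} (hf : constantCoeff f = 0)
    {d : σ →₀ ℕ} {N : ℕ} (hN : d.sum (fun _ k => k) ≤ N) :
    MvPowerSeries.coeff (R := R) d (expPS f) =
      ∑ m ∈ Finset.range (N + 1), (m.factorial : ℚ)⁻¹ • (MvPowerSeries.coeff (R := R) d (f ^ m)) := by
  rw [show MvPowerSeries.coeff (R := R) d (expPS f) = expPS f d from rfl, expPS]
  exact Finset.sum_subset (Finset.range_subset_range.2 (by omega))
    (fun m _ hm => by
      rw [coeff_pow_zero_of_lt hf (by simp only [mem_range, not_lt] at hm ⊢; omega), smul_zero])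

lemma expPS_zero : expPS (0 : MvPowerSeries σ R) = 1 := by
  ext d
  rw [show MvPowerSeries.coeff (R := R) d (expPS 0) = expPS 0 d from rfl, expPS]
  rw [Finset.sum_eq_single 0]
  · simp [show MvPowerSeries.coeff (R := R) d (1 : MvPowerSeries σ R) = (1 : MvPowerSeries σ R) d from rfl]
  · intro m _ hm
    rw [zero_pow hm, map_zero, smul_zero]
  · simp

lemma sum_eq_of_add_eq {d1 d2 d : σ →₀ ℕ} (h : d1 + d2 = d) :
    d1.sum (fun _ k => k) + d2.sum (fun _ k => k) = d.sum (fun _ k => k) := by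
  rw [← h, Finsupp.sum_add_index' (fun _ => rfl) (fun _ _ _ => rfl)]

lemma coeff_mul_pow_zero {f g : MvPowerSeries σ R} (hf : constantCoeff f = 0)
    (hg : constantCoeff g = 0) {d : σ →₀ ℕ} {i j : ℕ}
    (h : d.sum (fun _ k => k) < i + j) :
    MvPowerSeries.coeff (R := R) d (f ^ i * g ^ j) = 0 := by
  classical
  rw [coeff_mul]
  apply Finset.sum_eq_zero
  intro p hp
  rw [Finset.HasAntidiagonal.mem_antidiagonal] at hp
  have hsum := sum_eq_of_add_eq hp
  rcases lt_or_ge (p.1.sum (fun _ k => k)) i with h1 | h1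
  · rw [coeff_pow_zero_of_lt hf h1, zero_mul]
  · rw [coeff_pow_zero_of_lt hg (by omega), mul_zero]

lemma expPS_add {f g : MvPowerSeries σ R} (hf : constantCoeff f = 0)
    (hg : constantCoeff g = 0) :
    expPS (f + g) = expPS f * expPS g := by
  classical
  ext d
  set N := d.sum (fun _ k => k) with hNdef
  have hcc : constantCoeff (f + g) = 0 := by rw [map_add, hf, hg, add_zero]
  -- RHS
  have hrhs : MvPowerSeries.coeff (R := R) d (expPS f * expPS g) =
      ∑ i ∈ range (N + 1), ∑ j ∈ range (N + 1),
        ((i.factorial : ℚ)⁻¹ * (j.factorial : ℚ)⁻¹) •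
          MvPowerSeries.coeff (R := R) d (f ^ i * g ^ j) := by
    rw [coeff_mul]
    have : ∀ p ∈ Finset.HasAntidiagonal.antidiagonal d,
        MvPowerSeries.coeff (R := R) p.1 (expPS f) * MvPowerSeries.coeff (R := R) p.2 (expPS g) =
        ∑ i ∈ range (N + 1), ∑ j ∈ range (N + 1),
          ((i.factorial : ℚ)⁻¹ * (j.factorial : ℚ)⁻¹) •
            (MvPowerSeries.coeff (R := R) p.1 (f ^ i) * MvPowerSeries.coeff (R := R) p.2 (g ^ j)) := by
      intro p hp
      rw [Finset.HasAntidiagonal.mem_antidiagonal] at hp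
      have hsum := sum_eq_of_add_eq hp
      rw [coeff_expPS hf (N := N) (by omega), coeff_expPS hg (N := N) (by omega),
        Finset.sum_mul_sum]
      refine Finset.sum_congr rfl fun i _ => Finset.sum_congr rfl fun j _ => ?_
      rw [smul_mul_smul_comm]
    rw [Finset.sum_congr rfl this, Finset.sum_comm]
    -- now swap: ∑ i ∑ p ∑ j  vs ∑ i ∑ j ∑ p
    refine Finset.sum_congr rfl fun i _ => ?_
    rw [Finset.sum_comm]
    refine Finset.sum_congr rfl fun j _ => ?_
    rw [coeff_mul, Finset.smul_sum]
  -- LHS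
  have hlhs : MvPowerSeries.coeff (R := R) d (expPS (f + g)) =
      ∑ m ∈ range (N + 1), ∑ p ∈ Finset.HasAntidiagonal.antidiagonal m,
        ((p.1.factorial : ℚ)⁻¹ * (p.2.factorial : ℚ)⁻¹) •
          MvPowerSeries.coeff (R := R) d (f ^ p.1 * g ^ p.2) := by
    rw [coeff_expPS hcc (N := N) le_rfl]
    refine Finset.sum_congr rfl fun m _ => ?_
    rw [add_pow, map_sum, Finset.smul_sum, Finset.Nat.sum_antidiagonal_eq_sum_range_succ_mk]
    refine Finset.sum_congr rfl fun i hi => ?_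
    rw [mem_range] at hi
    have hle : i ≤ m := by omega
    rw [mul_comm (f ^ i * g ^ (m - i)) _, ← nsmul_eq_mul, map_nsmul]
    rw [smul_comm (m.factorial : ℚ)⁻¹ (m.choose i)]
    rw [← Nat.cast_smul_eq_nsmul ℚ (m.choose i), smul_smul]
    congr 1
    rw [Nat.cast_choose ℚ hle]
    have hi0 : (i.factorial : ℚ) ≠ 0 := Nat.cast_ne_zero.2 (Nat.factorial_ne_zero _)
    have hmi0 : ((m - i).factorial : ℚ) ≠ 0 := Nat.cast_ne_zero.2 (Nat.factorial_ne_zero _)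
    have hm0 : (m.factorial : ℚ) ≠ 0 := Nat.cast_ne_zero.2 (Nat.factorial_ne_zero _)
    field_simp
  rw [hlhs, hrhs]
  -- triangle = square, using antidiagonal biUnion
  have hdisj : ((range (N + 1) : Finset ℕ) : Set ℕ).PairwiseDisjoint Finset.HasAntidiagonal.antidiagonal := by
    intro a _ b _ hab
    simp only [Finset.disjoint_left]
    intro p hpa hpb
    rw [Finset.HasAntidiagonal.mem_antidiagonal] at hpa hpb
    exact hab (hpa ▸ hpb ▸ rfl)
  rw [← Finset.sum_biUnion hdisj, ← Finset.sum_product']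
  apply Finset.sum_subset
  · intro p hp
    simp only [Finset.mem_biUnion, mem_range, Finset.HasAntidiagonal.mem_antidiagonal] at hp
    obtain ⟨m, hm, rfl⟩ := hp
    simp only [Finset.mem_product, mem_range]
    omega
  · intro p hp hnp
    simp only [Finset.mem_biUnion, mem_range, Finset.HasAntidiagonal.mem_antidiagonal, not_exists, not_and] at hnp
    have : N < p.1 + p.2 := by
      by_contra hc
      exact hnp (p.1 + p.2) (by omega) rfl
    rw [coeff_mul_pow_zero hf hg this, smul_zero]

lemma expPS_nsmul {f : MvPowerSeries σ R} (hf : constantCoeff f = 0) (n : ℕ) :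
    expPS (n • f) = (expPS f) ^ n := by
  induction n with
  | zero => simpa using expPS_zero
  | succ n ih =>
    rw [succ_nsmul, expPS_add (by rw [map_nsmul, hf, smul_zero]) hf, ih, pow_succ]

lemma expPS_mul_neg {f : MvPowerSeries σ R} (hf : constantCoeff f = 0) :
    expPS f * expPS (-f) = 1 := by
  rw [← expPS_add hf (by rw [map_neg, hf, neg_zero]), add_neg_cancel, expPS_zero]

lemma expPS_sum {ι : Type*} (s : Finset ι) (f : ι → MvPowerSeries σ R)
    (hf : ∀ i ∈ s, constantCoeff (f i) = 0) :
    expPS (∑ i ∈ s, f i) = ∏ i ∈ s, expPS (f i) := by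
  classical
  induction s using Finset.induction_on with
  | empty => simpa using expPS_zero
  | @insert a s' hx ih =>
    rw [Finset.sum_insert hx, Finset.prod_insert hx,
      expPS_add (hf a (mem_insert_self a s'))
        (by rw [map_sum]; exact Finset.sum_eq_zero fun i hi => hf i (mem_insert_of_mem hi)),
      ih (fun i hi => hf i (mem_insert_of_mem hi))]

lemma le_of_mem_antidiagonal_left {d u v : σ →₀ ℕ} (h : u + v = d) : u ≤ d := by
  rw [← h]; exact le_self_add

lemma coeff_expPS_congr {f g : MvPowerSeries σ R} {e : σ →₀ ℕ}
    (h : ∀ d, d ≤ e → MvPowerSeries.coeff (R := R) d f = MvPowerSeries.coeff (R := R) d g) :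
    MvPowerSeries.coeff (R := R) e (expPS f) = MvPowerSeries.coeff (R := R) e (expPS g) := by
  classical
  have key : ∀ m : ℕ, ∀ d, d ≤ e →
      MvPowerSeries.coeff (R := R) d (f ^ m) = MvPowerSeries.coeff (R := R) d (g ^ m) := by
    intro m
    induction m with
    | zero => intro d _; rfl
    | succ m ih =>
      intro d hd
      rw [pow_succ, pow_succ, coeff_mul, coeff_mul]
      refine Finset.sum_congr rfl fun p hp => ?_
      rw [Finset.HasAntidiagonal.mem_antidiagonal] at hp
      have h1 : p.1 ≤ e := (le_of_mem_antidiagonal_left hp).trans hd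
      have h2 : p.2 ≤ e := (le_of_mem_antidiagonal_left (by rw [add_comm] at hp; exact hp)).trans hd
      rw [ih p.1 h1, h p.2 h2]
  rw [show MvPowerSeries.coeff (R := R) e (expPS f) = expPS f e from rfl,
    show MvPowerSeries.coeff (R := R) e (expPS g) = expPS g e from rfl, expPS, expPS]
  exact Finset.sum_congr rfl fun m _ => by rw [key m e le_rfl]

end General

lemma coeff_derivativeFun' {R : Type*} [CommSemiring R] (f : PowerSeries R) (n : ℕ) :
    PowerSeries.coeff n (PowerSeries.derivativeFun f) = PowerSeries.coeff (n + 1) f * ((n : R) + 1) :=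
  PowerSeries.coeff_derivative f n

section Univ
open Finset PowerSeries
variable {R : Type*} [CommRing R] [Algebra ℚ R]

lemma coeff1_pow_zero_of_lt {F : PowerSeries R} (hF : constantCoeff F = 0)
    {k m : ℕ} (h : k < m) : PowerSeries.coeff (R := R) k (F ^ m) = 0 := by
  have : (X : PowerSeries R) ^ m ∣ F ^ m := pow_dvd_pow_of_dvd (X_dvd_iff.2 hF) m
  exact X_pow_dvd_iff.1 this k h

lemma coeff_expPS1 {F : PowerSeries R} (hF : constantCoeff F = 0) {k N : ℕ} (hN : k ≤ N) :
    PowerSeries.coeff (R := R) k (expPS1 F) =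
      ∑ m ∈ Finset.range (N + 1), (m.factorial : ℚ)⁻¹ • (PowerSeries.coeff (R := R) k (F ^ m)) := by
  rw [expPS1, coeff_mk]
  exact Finset.sum_subset (Finset.range_subset_range.2 (by omega))
    (fun m _ hm => by
      rw [coeff1_pow_zero_of_lt hF (by simp only [mem_range, not_lt] at hm; omega), smul_zero])

lemma derivativeFun_pow (F : PowerSeries R) (m : ℕ) :
    derivativeFun (F ^ (m + 1)) = (m + 1) • (F ^ m * derivativeFun F) := by
  induction m with
  | zero => simp
  | succ m ih =>
    rw [pow_succ, derivativeFun_mul, ih]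
    simp only [smul_eq_mul, nsmul_eq_mul]
    push_cast
    ring

lemma derivativeFun_expPS1 {F : PowerSeries R} (hF : constantCoeff F = 0) :
    derivativeFun (expPS1 F) = derivativeFun F * expPS1 F := by
  ext n
  rw [coeff_derivativeFun', coeff_expPS1 hF (Nat.le_refl (n+1))]
  rw [Finset.sum_mul]
  have step1 : ∀ m ∈ Finset.range (n + 2),
      ((m.factorial : ℚ)⁻¹ • PowerSeries.coeff (R := R) (n+1) (F ^ m)) * ((n : R) + 1) =
      (if m = 0 then 0 else ((m-1).factorial : ℚ)⁻¹ • PowerSeries.coeff (R := R) n (F ^ (m-1) * derivativeFun F)) := by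
    intro m _
    match m with
    | 0 => simp
    | (m+1) =>
      simp only [Nat.add_sub_cancel, if_neg (Nat.succ_ne_zero m)]
      rw [smul_mul_assoc]
      have : PowerSeries.coeff (R := R) (n+1) (F ^ (m+1)) * ((n:R)+1)
          = PowerSeries.coeff (R := R) n (derivativeFun (F ^ (m+1))) := by
        rw [coeff_derivativeFun']
      rw [this, derivativeFun_pow, map_nsmul, smul_comm ((m+1).factorial : ℚ)⁻¹ (m+1),
        ← Nat.cast_smul_eq_nsmul ℚ (m+1), smul_smul]
      congr 1
      rw [Nat.factorial_succ]
      push_cast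
      have h1 : ((m+1 : ℚ)) ≠ 0 := by positivity
      have h2 : (m.factorial : ℚ) ≠ 0 := Nat.cast_ne_zero.2 (Nat.factorial_ne_zero _)
      field_simp
  rw [Finset.sum_congr rfl step1]
  have reindex : ∑ m ∈ Finset.range (n + 2),
      (if m = 0 then 0 else ((m-1).factorial : ℚ)⁻¹ • PowerSeries.coeff (R := R) n (F ^ (m-1) * derivativeFun F))
      = ∑ j ∈ Finset.range (n + 1), (j.factorial : ℚ)⁻¹ • PowerSeries.coeff (R := R) n (F ^ j * derivativeFun F) := by
    rw [Finset.sum_range_succ'] ; simp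
  rw [reindex]
  -- RHS
  rw [PowerSeries.coeff_mul]
  have rhs1 : ∀ p ∈ Finset.HasAntidiagonal.antidiagonal n,
      PowerSeries.coeff (R := R) p.1 (derivativeFun F) * PowerSeries.coeff (R := R) p.2 (expPS1 F)
      = ∑ j ∈ Finset.range (n+1), (j.factorial : ℚ)⁻¹ •
          (PowerSeries.coeff (R := R) p.1 (derivativeFun F) * PowerSeries.coeff (R := R) p.2 (F ^ j)) := by
    intro p hp
    rw [Finset.HasAntidiagonal.mem_antidiagonal] at hp
    rw [coeff_expPS1 hF (N := n) (by omega), Finset.mul_sum]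
    exact Finset.sum_congr rfl fun j _ => mul_smul_comm _ _ _
  rw [Finset.sum_congr rfl rhs1, Finset.sum_comm]
  refine Finset.sum_congr rfl fun j _ => ?_
  rw [← Finset.smul_sum, mul_comm (F ^ j) (derivativeFun F), PowerSeries.coeff_mul]

end Univ

section Univ2
open Finset PowerSeries
noncomputable def Lq : PowerSeries ℚ := PowerSeries.mk fun n => if n = 0 then 0 else -(n:ℚ)⁻¹

lemma constantCoeff_Lq : constantCoeff Lq = 0 := by
  rw [← coeff_zero_eq_constantCoeff, Lq, coeff_mk, if_pos rfl]

lemma coeff_dLq (n : ℕ) : PowerSeries.coeff (R := ℚ) n (derivativeFun Lq) = -1 := by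
  rw [coeff_derivativeFun', Lq, coeff_mk, if_neg (Nat.succ_ne_zero n)]
  push_cast
  have : ((n:ℚ)+1) ≠ 0 := by positivity
  field_simp

lemma expPS1_Lq : expPS1 Lq = 1 - PowerSeries.X := by
  set E := expPS1 Lq with hE
  have h0 : PowerSeries.coeff (R := ℚ) 0 E = 1 := by
    rw [hE, coeff_expPS1 constantCoeff_Lq (Nat.le_refl 0)]
    simp
  have hrec : ∀ n : ℕ, PowerSeries.coeff (R := ℚ) (n+1) E * ((n:ℚ)+1)
      = -∑ k ∈ range (n+1), PowerSeries.coeff (R := ℚ) k E := by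
    intro n
    have hd := derivativeFun_expPS1 constantCoeff_Lq
    have := congrArg (PowerSeries.coeff (R := ℚ) n) hd
    rw [coeff_derivativeFun', PowerSeries.coeff_mul] at this
    rw [this, Finset.Nat.sum_antidiagonal_eq_sum_range_succ_mk,
      ← Finset.sum_range_reflect (fun k => PowerSeries.coeff (R := ℚ) k (expPS1 Lq)) (n+1),
      ← Finset.sum_neg_distrib]
    refine Finset.sum_congr rfl fun k hk => ?_
    rw [mem_range] at hk
    simp only [coeff_dLq]
    rw [show n + 1 - 1 - k = n - k from by omega]
    ring
  have key : ∀ n : ℕ, (∑ k ∈ range (n+1), PowerSeries.coeff (R := ℚ) k E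
        = if n = 0 then 1 else 0)
      ∧ PowerSeries.coeff (R := ℚ) n E = (if n = 0 then 1 else if n = 1 then -1 else 0) := by
    intro n
    induction n with
    | zero => simp [h0]
    | succ n ih =>
      have hc : PowerSeries.coeff (R := ℚ) (n+1) E = (if n+1 = 0 then 1 else if n+1 = 1 then -1 else 0) := by
        have h := hrec n
        rw [ih.1] at h
        have hne : ((n:ℚ)+1) ≠ 0 := by positivity
        rcases Nat.eq_zero_or_pos n with rfl | hn
        · norm_num at h
          simpa using h
        · rw [if_neg (by omega), neg_zero] at h
          rw [(mul_eq_zero.1 h).resolve_right hne]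
          rw [if_neg (by omega), if_neg (by omega)]
      constructor
      · rw [Finset.sum_range_succ, ih.1, hc]
        rcases Nat.eq_zero_or_pos n with rfl | hn
        · norm_num
        · rw [if_neg (by omega), if_neg (by omega), if_neg (by omega), if_neg (by omega)]
          norm_num
      · exact hc
  ext n
  rw [(key n).2, map_sub, PowerSeries.coeff_one, PowerSeries.coeff_X]
  rcases n with _ | _ | n <;> norm_num

section Transfer
variable {R : Type*} [CommRing R] [Algebra ℚ R]

noncomputable def univLog (c : R) : PowerSeries R :=
  PowerSeries.mk fun n => if n = 0 then 0 else (-(n:ℚ)⁻¹) • c^n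

lemma constantCoeff_univLog (c : R) : constantCoeff (univLog c) = 0 := by
  rw [← coeff_zero_eq_constantCoeff, univLog, coeff_mk, if_pos rfl]

lemma map_expPS1 (f : PowerSeries ℚ) :
    PowerSeries.map (algebraMap ℚ R) (expPS1 f) = expPS1 (PowerSeries.map (algebraMap ℚ R) f) := by
  ext k
  rw [PowerSeries.coeff_map, expPS1, expPS1, coeff_mk, coeff_mk, map_sum]
  refine Finset.sum_congr rfl fun m _ => ?_
  rw [← map_pow, PowerSeries.coeff_map, smul_eq_mul, map_mul, Algebra.smul_def]

lemma rescale_expPS1 (c : R) (f : PowerSeries R) :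
    PowerSeries.rescale c (expPS1 f) = expPS1 (PowerSeries.rescale c f) := by
  ext k
  rw [coeff_rescale, expPS1, expPS1, coeff_mk, coeff_mk, Finset.mul_sum]
  refine Finset.sum_congr rfl fun m _ => ?_
  rw [← map_pow, coeff_rescale, mul_smul_comm]

lemma univLog_eq (c : R) :
    univLog c = PowerSeries.rescale c (PowerSeries.map (algebraMap ℚ R) Lq) := by
  ext n
  rw [univLog, coeff_mk, coeff_rescale, PowerSeries.coeff_map, Lq, coeff_mk]
  rcases Nat.eq_zero_or_pos n with rfl | hn
  · simp
  · rw [if_neg (by omega), if_neg (by omega), Algebra.smul_def, mul_comm]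

lemma rescale_one_sub_X (c : R) :
    PowerSeries.rescale c (1 - PowerSeries.X) = 1 - PowerSeries.C c * PowerSeries.X := by
  ext n
  simp only [coeff_rescale, map_sub, PowerSeries.coeff_one, PowerSeries.coeff_C_mul,
    PowerSeries.coeff_X]
  rcases n with _ | _ | n <;> simp

theorem expPS1_univLog (c : R) :
    expPS1 (univLog c) = 1 - PowerSeries.C c * PowerSeries.X := by
  rw [univLog_eq, ← rescale_expPS1, ← map_expPS1, expPS1_Lq]
  rw [map_sub, map_one, PowerSeries.map_X, rescale_one_sub_X]

end Transfer
end Univ2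

section OnMul
open Finset MvPowerSeries
variable {σ : Type} {R : Type*} [CommRing R] [Algebra ℚ R]

/-- `f` is the image of the univariate power series `F` under `X ↦ monomial μ 1`. -/
def OnMul (μ : σ →₀ ℕ) (f : MvPowerSeries σ R) (F : PowerSeries R) : Prop :=
  (∀ n : ℕ, MvPowerSeries.coeff (R := R) (n • μ) f = PowerSeries.coeff (R := R) n F) ∧
  (∀ d : σ →₀ ℕ, (∀ n : ℕ, d ≠ n • μ) → MvPowerSeries.coeff (R := R) d f = 0)

variable {μ : σ →₀ ℕ} {i : σ}

lemma smul_mu_inj (hi : μ i ≠ 0) {a b : ℕ} (h : a • μ = b • μ) : a = b := by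
  have h' : a * μ i = b * μ i := by
    have := congrArg (fun d : σ →₀ ℕ => d i) h
    simpa [Finsupp.smul_apply] using this
  exact Nat.eq_of_mul_eq_mul_right (Nat.pos_of_ne_zero hi) h'

lemma OnMul.ext (hi : μ i ≠ 0) {f g : MvPowerSeries σ R} {F : PowerSeries R}
    (hf : OnMul μ f F) (hg : OnMul μ g F) : f = g := by
  ext d
  by_cases h : ∃ n : ℕ, d = n • μ
  · obtain ⟨n, rfl⟩ := h
    rw [hf.1, hg.1]
  · push_neg at h
    rw [hf.2 d h, hg.2 d h]

lemma OnMul.one (hi : μ i ≠ 0) : OnMul μ (1 : MvPowerSeries σ R) (1 : PowerSeries R) := by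
  classical
  constructor
  · intro n
    rw [MvPowerSeries.coeff_one, PowerSeries.coeff_one]
    rcases Nat.eq_zero_or_pos n with rfl | hn
    · simp
    · rw [if_neg, if_neg (by omega)]
      intro hc
      have := congrArg (fun d : σ →₀ ℕ => d i) hc
      simp only [Finsupp.smul_apply, Finsupp.coe_zero, Pi.zero_apply, smul_eq_mul] at this
      exact hi (by
        rcases Nat.mul_eq_zero.1 this with h | h
        · omega
        · exact h)
  · intro d hd
    rw [MvPowerSeries.coeff_one, if_neg]
    intro hc
    exact hd 0 (by simpa using hc)

lemma OnMul.mul (hi : μ i ≠ 0) {f g : MvPowerSeries σ R} {F G : PowerSeries R}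
    (hf : OnMul μ f F) (hg : OnMul μ g G) : OnMul μ (f * g) (F * G) := by
  classical
  constructor
  · intro n
    rw [MvPowerSeries.coeff_mul, PowerSeries.coeff_mul]
    have himg : ∑ p ∈ Finset.HasAntidiagonal.antidiagonal n, PowerSeries.coeff (R := R) p.1 F * PowerSeries.coeff (R := R) p.2 G
        = ∑ q ∈ (Finset.HasAntidiagonal.antidiagonal n).image (fun p : ℕ × ℕ => (p.1 • μ, p.2 • μ)),
            MvPowerSeries.coeff (R := R) q.1 f * MvPowerSeries.coeff (R := R) q.2 g := by
      rw [Finset.sum_image]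
      · exact Finset.sum_congr rfl fun p _ => by rw [hf.1, hg.1]
      · intro p _ q _ hpq
        have h1 := smul_mu_inj hi (congrArg Prod.fst hpq)
        have h2 := smul_mu_inj hi (congrArg Prod.snd hpq)
        exact Prod.ext h1 h2
    rw [himg]
    symm
    apply Finset.sum_subset
    · intro q hq
      simp only [Finset.mem_image, Finset.HasAntidiagonal.mem_antidiagonal] at hq
      obtain ⟨p, hp, rfl⟩ := hq
      rw [Finset.HasAntidiagonal.mem_antidiagonal]
      rw [← add_smul, hp]
    · intro q hq hnq
      rw [Finset.HasAntidiagonal.mem_antidiagonal] at hq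
      by_cases h1 : ∃ a : ℕ, q.1 = a • μ
      · obtain ⟨a, ha⟩ := h1
        by_cases h2 : ∃ b : ℕ, q.2 = b • μ
        · obtain ⟨b, hb⟩ := h2
          exfalso
          apply hnq
          simp only [Finset.mem_image, Finset.HasAntidiagonal.mem_antidiagonal]
          refine ⟨(a, b), ?_, ?_⟩
          · apply smul_mu_inj hi
            rw [add_smul, ← ha, ← hb, hq]
          · rw [← ha, ← hb]
        · push_neg at h2
          rw [hg.2 q.2 h2, mul_zero]
      · push_neg at h1
        rw [hf.2 q.1 h1, zero_mul]
  · intro d hd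
    rw [MvPowerSeries.coeff_mul]
    apply Finset.sum_eq_zero
    intro q hq
    rw [Finset.HasAntidiagonal.mem_antidiagonal] at hq
    by_cases h1 : ∃ a : ℕ, q.1 = a • μ
    · obtain ⟨a, ha⟩ := h1
      by_cases h2 : ∃ b : ℕ, q.2 = b • μ
      · obtain ⟨b, hb⟩ := h2
        exact absurd (by rw [← hq, ha, hb, ← add_smul]) (hd (a + b))
      · push_neg at h2
        rw [hg.2 q.2 h2, mul_zero]
    · push_neg at h1
      rw [hf.2 q.1 h1, zero_mul]

lemma OnMul.pow (hi : μ i ≠ 0) {f : MvPowerSeries σ R} {F : PowerSeries R}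
    (hf : OnMul μ f F) (m : ℕ) : OnMul μ (f ^ m) (F ^ m) := by
  induction m with
  | zero => simpa using OnMul.one hi
  | succ m ih => rw [pow_succ, pow_succ]; exact OnMul.mul hi ih hf

lemma le_sum_of_apply (d : σ →₀ ℕ) (j : σ) : d j ≤ d.sum (fun _ k => k) := by
  rw [← degree_eq_sum]
  exact Finsupp.le_degree j d

lemma OnMul.exp (hi : μ i ≠ 0) {f : MvPowerSeries σ R} {F : PowerSeries R}
    (hf : OnMul μ f F) (hF : PowerSeries.constantCoeff F = 0) :
    OnMul μ (expPS f) (expPS1 F) := by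
  constructor
  · intro n
    rw [show MvPowerSeries.coeff (R := R) (n • μ) (expPS f) = expPS f (n • μ) from rfl, expPS,
      show PowerSeries.coeff (R := R) n (expPS1 F) = _ from PowerSeries.coeff_mk _ _]
    have hbound : n ≤ (n • μ).sum (fun _ k => k) := by
      have h1 : n * μ i ≤ (n • μ).sum (fun _ k => k) := by
        have := le_sum_of_apply (n • μ) i
        simpa [Finsupp.smul_apply] using this
      have h2 : n ≤ n * μ i := Nat.le_mul_of_pos_right n (Nat.pos_of_ne_zero hi)
      omega
    rw [show ∑ m ∈ Finset.range ((n • μ).sum (fun _ k => k) + 1),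
          (m.factorial : ℚ)⁻¹ • (MvPowerSeries.coeff (R := R) (n • μ) (f ^ m))
        = ∑ m ∈ Finset.range ((n • μ).sum (fun _ k => k) + 1),
          (m.factorial : ℚ)⁻¹ • (PowerSeries.coeff (R := R) n (F ^ m)) from
      Finset.sum_congr rfl fun m _ => by rw [(OnMul.pow hi hf m).1]]
    symm
    apply Finset.sum_subset (Finset.range_subset_range.2 (by omega))
    intro m _ hm
    rw [mem_range, not_lt] at hm
    rw [coeff1_pow_zero_of_lt hF (by omega), smul_zero]
  · intro d hd
    rw [show MvPowerSeries.coeff (R := R) d (expPS f) = expPS f d from rfl, expPS]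
    apply Finset.sum_eq_zero
    intro m _
    rw [(OnMul.pow hi hf m).2 d hd, smul_zero]

end OnMul

section MLog
open Finset MvPowerSeries
variable {σ : Type} {R : Type*} [CommRing R] [Algebra ℚ R]

open Classical in
noncomputable def mlog (μ : σ →₀ ℕ) (c : R) : MvPowerSeries σ R :=
  fun d => if h : ∃ n : ℕ, d = n • μ then PowerSeries.coeff (R := R) h.choose (univLog c) else 0

variable {μ : σ →₀ ℕ} {i : σ}

lemma OnMul_mlog (hi : μ i ≠ 0) (c : R) : OnMul μ (mlog μ c) (univLog c) := by
  classical
  constructor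
  · intro n
    have hex : ∃ m : ℕ, n • μ = m • μ := ⟨n, rfl⟩
    rw [show (MvPowerSeries.coeff (R := R) (n • μ)) (mlog μ c)
        = if h : ∃ m : ℕ, n • μ = m • μ then PowerSeries.coeff (R := R) h.choose (univLog c) else 0
      from rfl, dif_pos hex]
    rw [show hex.choose = n from (smul_mu_inj hi hex.choose_spec).symm]
  · intro d hd
    rw [show (MvPowerSeries.coeff (R := R) d) (mlog μ c)
        = if h : ∃ m : ℕ, d = m • μ then PowerSeries.coeff (R := R) h.choose (univLog c) else 0
      from rfl, dif_neg]
    push_neg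
    exact hd

lemma constantCoeff_mlog (hi : μ i ≠ 0) (c : R) :
    MvPowerSeries.constantCoeff (mlog μ c) = 0 := by
  have h := (OnMul_mlog hi c).1 0
  rw [zero_smul] at h
  rw [← MvPowerSeries.coeff_zero_eq_constantCoeff, h,
    PowerSeries.coeff_zero_eq_constantCoeff, constantCoeff_univLog]

lemma onmul_one_sub_monomial (hi : μ i ≠ 0) (c : R) :
    OnMul μ (1 - MvPowerSeries.monomial μ c) (1 - PowerSeries.C c * PowerSeries.X) := by
  classical
  constructor
  · intro n
    rw [map_sub, map_sub, MvPowerSeries.coeff_one, PowerSeries.coeff_one,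
      MvPowerSeries.coeff_monomial, PowerSeries.coeff_C_mul, PowerSeries.coeff_X]
    have e1 : (n • μ = 0) ↔ n = 0 := by
      constructor
      · intro h; exact smul_mu_inj hi (by rw [h, zero_smul])
      · rintro rfl; rw [zero_smul]
    have e2 : (n • μ = μ) ↔ n = 1 := by
      constructor
      · intro h; exact smul_mu_inj hi (by rw [h, one_smul])
      · rintro rfl; rw [one_smul]
    rcases eq_or_ne n 0 with rfl | h0
    · rw [if_pos (e1.2 rfl), if_pos rfl, if_neg (by rw [e2]; omega), if_neg (by omega)]
      simp
    · rw [if_neg (fun hc => h0 (e1.1 hc)), if_neg h0]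
      rcases eq_or_ne n 1 with rfl | h1
      · rw [if_pos (e2.2 rfl), if_pos rfl]; simp
      · rw [if_neg (fun hc => h1 (e2.1 hc)), if_neg h1]; simp
  · intro d hd
    rw [map_sub, MvPowerSeries.coeff_one, MvPowerSeries.coeff_monomial,
      if_neg (fun hc => (hd 0) (by rw [hc, zero_smul])),
      if_neg (fun hc => (hd 1) (by rw [hc, one_smul])), sub_zero]

lemma expPS_mlog (hi : μ i ≠ 0) (c : R) :
    expPS (mlog μ c) = 1 - MvPowerSeries.monomial μ c := by
  refine OnMul.ext hi (OnMul.exp hi (OnMul_mlog hi c) (constantCoeff_univLog c)) ?_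
  rw [expPS1_univLog]
  exact onmul_one_sub_monomial hi c

lemma mv_inv_unique {u a b : MvPowerSeries σ R} (ha : u * a = 1) (hb : u * b = 1) : a = b := by
  calc a = a * (u * b) := by rw [hb, mul_one]
  _ = b * (u * a) := by ring
  _ = b := by rw [ha, mul_one]

lemma constantCoeff_one_sub_monomial (hi : μ i ≠ 0) (c : R) :
    MvPowerSeries.constantCoeff (1 - MvPowerSeries.monomial μ c) = 1 := by
  classical
  rw [map_sub, map_one, ← MvPowerSeries.coeff_zero_eq_constantCoeff,
    MvPowerSeries.coeff_monomial, if_neg, sub_zero]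
  intro hc
  exact hi (by rw [← hc]; rfl)

lemma expPS_neg_mlog (hi : μ i ≠ 0) (c : R) :
    expPS (- mlog μ c) = MvPowerSeries.invOfUnit (1 - MvPowerSeries.monomial μ c) 1 := by
  have hunit : MvPowerSeries.constantCoeff (1 - MvPowerSeries.monomial μ c) = ((1 : Rˣ) : R) :=
    constantCoeff_one_sub_monomial hi c
  have h2 := MvPowerSeries.mul_invOfUnit (1 - MvPowerSeries.monomial μ c) 1 hunit
  have h1 : (1 - MvPowerSeries.monomial μ c) * expPS (- mlog μ c) = 1 := by
    rw [← expPS_mlog hi c]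
    exact expPS_mul_neg (constantCoeff_mlog hi c)
  exact mv_inv_unique h1 h2

end MLog

section Deg3
open Finset MvPowerSeries

lemma deg3_apply (a b c : ℕ) (j : Fin 3) :
    deg3 a b c j = if j = 0 then a else if j = 1 then b else c := by
  fin_cases j <;> simp [deg3, Finsupp.single_apply]

lemma deg3_apply0 (a b c : ℕ) : deg3 a b c 0 = a := by rw [deg3_apply]; rfl
lemma deg3_apply1 (a b c : ℕ) : deg3 a b c 1 = b := by rw [deg3_apply]; rfl
lemma deg3_apply2 (a b c : ℕ) : deg3 a b c 2 = c := by rw [deg3_apply]; rfl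

lemma smul_deg3 (n a b c : ℕ) : n • deg3 a b c = deg3 (n*a) (n*b) (n*c) := by
  ext j
  rw [Finsupp.smul_apply, deg3_apply, deg3_apply, smul_eq_mul]
  split_ifs <;> rfl

noncomputable def S1 (μ : Fin 3 →₀ ℕ) : MvPowerSeries (Fin 3) (Polynomial ℚ) :=
  mlog μ 1 + mlog μ (Polynomial.X ^ 2) + 2 • (- mlog μ Polynomial.X)

noncomputable def S3 (μ : Fin 3 →₀ ℕ) : MvPowerSeries (Fin 3) (Polynomial ℚ) :=
  2 • mlog μ Polynomial.X + (- mlog μ 1) + (- mlog μ (Polynomial.X ^ 2))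

variable {μ : Fin 3 →₀ ℕ} {i : Fin 3}

lemma constantCoeff_S1 (hi : μ i ≠ 0) : MvPowerSeries.constantCoeff (S1 μ) = 0 := by
  rw [S1, map_add, map_add, map_nsmul, map_neg,
    constantCoeff_mlog hi, constantCoeff_mlog hi, constantCoeff_mlog hi]
  simp

lemma constantCoeff_S3 (hi : μ i ≠ 0) : MvPowerSeries.constantCoeff (S3 μ) = 0 := by
  rw [S3, map_add, map_add, map_nsmul, map_neg, map_neg,
    constantCoeff_mlog hi, constantCoeff_mlog hi, constantCoeff_mlog hi]
  simp

lemma expPS_S1 (hi : μ i ≠ 0) :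
    expPS (S1 μ) = (1 - MvPowerSeries.monomial μ 1) *
      (1 - MvPowerSeries.monomial μ (Polynomial.X ^ 2)) *
      (MvPowerSeries.invOfUnit (1 - MvPowerSeries.monomial μ Polynomial.X) 1) ^ 2 := by
  rw [S1, expPS_add (by rw [map_add, constantCoeff_mlog hi, constantCoeff_mlog hi, add_zero])
      (by rw [map_nsmul, map_neg, constantCoeff_mlog hi, neg_zero, smul_zero]),
    expPS_add (constantCoeff_mlog hi 1) (constantCoeff_mlog hi _),
    expPS_nsmul (by rw [map_neg, constantCoeff_mlog hi, neg_zero]),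
    expPS_mlog hi, expPS_mlog hi, expPS_neg_mlog hi]

lemma expPS_S3 (hi : μ i ≠ 0) :
    expPS (S3 μ) = (1 - MvPowerSeries.monomial μ Polynomial.X) ^ 2 *
      (MvPowerSeries.invOfUnit (1 - MvPowerSeries.monomial μ 1) 1) *
      (MvPowerSeries.invOfUnit (1 - MvPowerSeries.monomial μ (Polynomial.X ^ 2)) 1) := by
  rw [S3, expPS_add (by rw [map_add, map_nsmul, map_neg, constantCoeff_mlog hi,
        constantCoeff_mlog hi, neg_zero, smul_zero, add_zero])
      (by rw [map_neg, constantCoeff_mlog hi, neg_zero]),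
    expPS_add (by rw [map_nsmul, constantCoeff_mlog hi, smul_zero])
      (by rw [map_neg, constantCoeff_mlog hi, neg_zero]),
    expPS_nsmul (constantCoeff_mlog hi _),
    expPS_mlog hi, expPS_neg_mlog hi, expPS_neg_mlog hi]

noncomputable def Skl (k l : ℕ) : MvPowerSeries (Fin 3) (Polynomial ℚ) :=
  l • S1 (deg3 l (k+1) k) + l • S1 (deg3 l k (k+1)) + (2*l) • S3 (deg3 l (k+1) (k+1))

lemma hi1 (l k : ℕ) : deg3 l (k+1) k 1 ≠ 0 := by rw [deg3_apply1]; omega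
lemma hi2 (l k : ℕ) : deg3 l k (k+1) 2 ≠ 0 := by rw [deg3_apply2]; omega
lemma hi3 (l k : ℕ) : deg3 l (k+1) (k+1) 1 ≠ 0 := by rw [deg3_apply1]; omega

lemma constantCoeff_Skl (k l : ℕ) :
    MvPowerSeries.constantCoeff (Skl k l) = 0 := by
  rw [Skl, map_add, map_add, map_nsmul, map_nsmul, map_nsmul,
    constantCoeff_S1 (hi1 l k), constantCoeff_S1 (hi2 l k), constantCoeff_S3 (hi3 l k)]
  simp

lemma expPS_Skl (k l : ℕ) : expPS (Skl k l) = factor65 k l := by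
  have c1 : MvPowerSeries.constantCoeff (l • S1 (deg3 l (k+1) k)) = 0 := by
    rw [map_nsmul, constantCoeff_S1 (hi1 l k), smul_zero]
  have c2 : MvPowerSeries.constantCoeff (l • S1 (deg3 l k (k+1))) = 0 := by
    rw [map_nsmul, constantCoeff_S1 (hi2 l k), smul_zero]
  have c3 : MvPowerSeries.constantCoeff ((2*l) • S3 (deg3 l (k+1) (k+1))) = 0 := by
    rw [map_nsmul, constantCoeff_S3 (hi3 l k), smul_zero]
  rw [Skl, expPS_add (by rw [map_add, c1, c2, add_zero]) c3,
    expPS_add c1 c2,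
    expPS_nsmul (constantCoeff_S1 (hi1 l k)), expPS_nsmul (constantCoeff_S1 (hi2 l k)),
    expPS_nsmul (constantCoeff_S3 (hi3 l k)),
    expPS_S1 (hi1 l k), expPS_S1 (hi2 l k), expPS_S3 (hi3 l k), factor65]
  rfl

end Deg3

noncomputable def T65 (d : Fin 3 →₀ ℕ) (n s l : ℕ) : Polynomial ℚ :=
  if 1 ≤ n ∧ 1 ≤ l then
    (((n : ℚ))⁻¹ * (l : ℚ)) • (((1 - Polynomial.X ^ n) ^ 2 : Polynomial ℚ) *
      ((if d = deg3 (n * l) (n * s + n) (n * s) then (-1 : Polynomial ℚ) else 0) +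
       (if d = deg3 (n * l) (n * s) (n * s + n) then (-1 : Polynomial ℚ) else 0) +
       (if d = deg3 (n * l) (n * s + n) (n * s + n) then (2 : Polynomial ℚ) else 0)))
  else 0

open Finset MvPowerSeries

section OnMulLin
variable {σ : Type} {R : Type*} [CommRing R] [Algebra ℚ R] {μ : σ →₀ ℕ} {i : σ}

lemma OnMul.add' {f g : MvPowerSeries σ R} {F G : PowerSeries R}
    (hf : OnMul μ f F) (hg : OnMul μ g G) : OnMul μ (f + g) (F + G) :=
  ⟨fun n => by rw [map_add, map_add, hf.1, hg.1],
   fun d hd => by rw [map_add, hf.2 d hd, hg.2 d hd, add_zero]⟩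

lemma OnMul.neg' {f : MvPowerSeries σ R} {F : PowerSeries R}
    (hf : OnMul μ f F) : OnMul μ (-f) (-F) :=
  ⟨fun n => by rw [map_neg, map_neg, hf.1],
   fun d hd => by rw [map_neg, hf.2 d hd, neg_zero]⟩

lemma OnMul.nsmul' {f : MvPowerSeries σ R} {F : PowerSeries R}
    (hf : OnMul μ f F) (m : ℕ) : OnMul μ (m • f) (m • F) :=
  ⟨fun n => by rw [map_nsmul, map_nsmul, hf.1],
   fun d hd => by rw [map_nsmul, hf.2 d hd, smul_zero]⟩

lemma OnMul.coeff_eq_sum [DecidableEq σ] (hi : μ i ≠ 0) {f : MvPowerSeries σ R} {F : PowerSeries R}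
    (hf : OnMul μ f F) {d : σ →₀ ℕ} {M : ℕ} (hb : ∀ n : ℕ, d = n • μ → n ≤ M) :
    MvPowerSeries.coeff (R := R) d f =
      ∑ n ∈ range (M+1), if d = n • μ then PowerSeries.coeff (R := R) n F else 0 := by
  by_cases h : ∃ n : ℕ, d = n • μ
  · obtain ⟨n0, rfl⟩ := h
    rw [hf.1 n0]
    rw [Finset.sum_eq_single n0]
    · rw [if_pos rfl]
    · intro b _ hb'
      rw [if_neg]
      intro hc
      exact hb' (smul_mu_inj hi hc).symm
    · intro hn0
      exact absurd (mem_range.2 (by have := hb n0 rfl; omega)) hn0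
  · push_neg at h
    rw [hf.2 d h]
    symm
    apply Finset.sum_eq_zero
    intro n _
    rw [if_neg (h n)]

end OnMulLin

noncomputable def F1 : PowerSeries (Polynomial ℚ) :=
  univLog 1 + univLog (Polynomial.X ^ 2) + 2 • (- univLog Polynomial.X)

noncomputable def F3 : PowerSeries (Polynomial ℚ) :=
  2 • univLog Polynomial.X + (- univLog 1) + (- univLog (Polynomial.X ^ 2))

lemma OnMul_S1 {μ : Fin 3 →₀ ℕ} {i : Fin 3} (hi : μ i ≠ 0) : OnMul μ (S1 μ) F1 :=
  OnMul.add' (OnMul.add' (OnMul_mlog hi 1) (OnMul_mlog hi _))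
    ((OnMul.nsmul' (OnMul.neg' (OnMul_mlog hi _)) 2))

lemma OnMul_S3 {μ : Fin 3 →₀ ℕ} {i : Fin 3} (hi : μ i ≠ 0) : OnMul μ (S3 μ) F3 :=
  OnMul.add' (OnMul.add' (OnMul.nsmul' (OnMul_mlog hi _) 2) (OnMul.neg' (OnMul_mlog hi 1)))
    (OnMul.neg' (OnMul_mlog hi _))

lemma coeff_univLog (c : Polynomial ℚ) (n : ℕ) :
    PowerSeries.coeff (R := Polynomial ℚ) n (univLog c) =
      if n = 0 then 0 else (-(n:ℚ)⁻¹) • c^n := PowerSeries.coeff_mk _ _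

lemma coeff_F1 (n : ℕ) (hn : n ≠ 0) :
    PowerSeries.coeff (R := Polynomial ℚ) n F1 =
      (-(n:ℚ)⁻¹) • (1 + Polynomial.X^(2*n) - 2 * Polynomial.X^n : Polynomial ℚ) := by
  rw [F1, map_add, map_add, map_nsmul, map_neg, coeff_univLog, coeff_univLog, coeff_univLog,
    if_neg hn, if_neg hn, if_neg hn]
  simp only [Polynomial.smul_eq_C_mul, nsmul_eq_mul]
  push_cast
  rw [← pow_mul]
  ring

lemma coeff_F3 (n : ℕ) (hn : n ≠ 0) :
    PowerSeries.coeff (R := Polynomial ℚ) n F3 =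
      (-(n:ℚ)⁻¹) • (2 * Polynomial.X^n - 1 - Polynomial.X^(2*n) : Polynomial ℚ) := by
  rw [F3, map_add, map_add, map_nsmul, map_neg, map_neg, coeff_univLog, coeff_univLog,
    coeff_univLog, if_neg hn, if_neg hn, if_neg hn]
  simp only [Polynomial.smul_eq_C_mul, nsmul_eq_mul]
  push_cast
  rw [← pow_mul]
  ring

lemma coeff_F1_zero : PowerSeries.coeff (R := Polynomial ℚ) 0 F1 = 0 := by
  rw [F1, map_add, map_add, map_nsmul, map_neg, coeff_univLog, coeff_univLog, coeff_univLog]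
  simp

lemma coeff_F3_zero : PowerSeries.coeff (R := Polynomial ℚ) 0 F3 = 0 := by
  rw [F3, map_add, map_add, map_nsmul, map_neg, map_neg, coeff_univLog, coeff_univLog,
    coeff_univLog]
  simp

lemma T65_pointwise (d : Fin 3 →₀ ℕ) (s l n : ℕ) (hl : 1 ≤ l) :
    T65 d n s l =
      l • (if d = n • deg3 l (s+1) s then PowerSeries.coeff (R := Polynomial ℚ) n F1 else 0)
      + l • (if d = n • deg3 l s (s+1) then PowerSeries.coeff (R := Polynomial ℚ) n F1 else 0)
      + (2*l) • (if d = n • deg3 l (s+1) (s+1) then PowerSeries.coeff (R := Polynomial ℚ) n F3 else 0) := by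
  rcases Nat.eq_zero_or_pos n with rfl | hn
  · rw [T65, if_neg (by omega)]
    rw [coeff_F1_zero, coeff_F3_zero]
    simp
  have hn0 : n ≠ 0 := by omega
  simp only [smul_deg3, Nat.mul_succ]
  rw [T65, if_pos ⟨hn, hl⟩, coeff_F1 n hn0, coeff_F3 n hn0]
  set A := deg3 (n * l) (n * s + n) (n * s) with hA
  set B := deg3 (n * l) (n * s) (n * s + n) with hB
  set C := deg3 (n * l) (n * s + n) (n * s + n) with hC
  have hAB : A ≠ B := by
    intro h
    have := congrArg (fun d : Fin 3 →₀ ℕ => d 1) h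
    simp only [hA, hB, deg3_apply1] at this
    omega
  have hAC : A ≠ C := by
    intro h
    have := congrArg (fun d : Fin 3 →₀ ℕ => d 2) h
    simp only [hA, hC, deg3_apply2] at this
    omega
  have hBC : B ≠ C := by
    intro h
    have := congrArg (fun d : Fin 3 →₀ ℕ => d 1) h
    simp only [hB, hC, deg3_apply1] at this
    omega
  by_cases h1 : d = A
  · have hB' : ¬(d = B) := fun hc => hAB (h1.symm.trans hc)
    have hC' : ¬(d = C) := fun hc => hAC (h1.symm.trans hc)
    simp only [if_pos h1, if_neg hB', if_neg hC']
    simp only [smul_zero, add_zero, zero_add, mul_zero, nsmul_eq_mul,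
      Polynomial.smul_eq_C_mul, map_mul, map_neg, map_natCast]
    push_cast
    ring
  · by_cases h2 : d = B
    · have hC' : ¬(d = C) := fun hc => hBC (h2.symm.trans hc)
      simp only [if_pos h2, if_neg h1, if_neg hC']
      simp only [smul_zero, add_zero, zero_add, mul_zero, nsmul_eq_mul,
        Polynomial.smul_eq_C_mul, map_mul, map_neg, map_natCast]
      push_cast
      ring
    · by_cases h3 : d = C
      · simp only [if_pos h3, if_neg h1, if_neg h2]
        simp only [smul_zero, add_zero, zero_add, mul_zero, nsmul_eq_mul,
          Polynomial.smul_eq_C_mul, map_mul, map_neg, map_natCast]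
        push_cast
        ring
      · simp only [if_neg h1, if_neg h2, if_neg h3]
        simp

lemma expArg65_apply (d : Fin 3 →₀ ℕ) :
    MvPowerSeries.coeff (R := Polynomial ℚ) d expArg65 = ∑ᶠ (n : ℕ) (s : ℕ) (l : ℕ), T65 d n s l := rfl

lemma T65_ne_zero {d : Fin 3 →₀ ℕ} {n s l : ℕ} (h : T65 d n s l ≠ 0) :
    1 ≤ n ∧ 1 ≤ l ∧ n ≤ d 0 ∧ l ≤ d 0 ∧ s ≤ d 1 + d 2 ∧ 2*(n*s) + n ≤ d 1 + d 2 := by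
  rw [T65] at h
  by_cases hc : 1 ≤ n ∧ 1 ≤ l
  swap
  · rw [if_neg hc] at h; exact absurd rfl h
  obtain ⟨hn, hl⟩ := hc
  rw [if_pos ⟨hn, hl⟩] at h
  have hnl1 : n ≤ n * l := Nat.le_mul_of_pos_right n (by omega)
  have hnl2 : l ≤ n * l := Nat.le_mul_of_pos_left l (by omega)
  have hns : s ≤ n * s := Nat.le_mul_of_pos_left s (by omega)
  by_cases h1 : d = deg3 (n * l) (n * s + n) (n * s)
  · rw [h1, deg3_apply0, deg3_apply1, deg3_apply2]
    refine ⟨hn, hl, by omega, by omega, by omega, by omega⟩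
  by_cases h2 : d = deg3 (n * l) (n * s) (n * s + n)
  · rw [h2, deg3_apply0, deg3_apply1, deg3_apply2]
    refine ⟨hn, hl, by omega, by omega, by omega, by omega⟩
  by_cases h3 : d = deg3 (n * l) (n * s + n) (n * s + n)
  · rw [h3, deg3_apply0, deg3_apply1, deg3_apply2]
    refine ⟨hn, hl, by omega, by omega, by omega, by omega⟩
  exfalso
  apply h
  rw [if_neg h1, if_neg h2, if_neg h3]
  simp

lemma expArg65_coeff_eq (d : Fin 3 →₀ ℕ) :
    MvPowerSeries.coeff (R := Polynomial ℚ) d expArg65 =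
      ∑ n ∈ range (d 0 + d 1 + d 2 + 1), ∑ s ∈ range (d 0 + d 1 + d 2 + 1),
        ∑ l ∈ range (d 0 + d 1 + d 2 + 1), T65 d n s l := by
  set M := d 0 + d 1 + d 2 with hM
  rw [expArg65_apply]
  have hl : ∀ n s : ℕ, (∑ᶠ l : ℕ, T65 d n s l) = ∑ l ∈ range (M+1), T65 d n s l := by
    intro n s
    apply finsum_eq_finset_sum_of_support_subset
    intro l hl
    rw [Function.mem_support] at hl
    have := T65_ne_zero hl
    simp only [coe_range, Set.mem_Iio]
    omega
  have hs : ∀ n : ℕ, (∑ᶠ (s : ℕ) (l : ℕ), T65 d n s l)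
      = ∑ s ∈ range (M+1), ∑ l ∈ range (M+1), T65 d n s l := by
    intro n
    rw [finsum_congr (hl n)]
    apply finsum_eq_finset_sum_of_support_subset
    intro s hs
    rw [Function.mem_support] at hs
    have : ∃ l ∈ range (M+1), T65 d n s l ≠ 0 := by
      by_contra hcon
      push_neg at hcon
      exact hs (Finset.sum_eq_zero hcon)
    obtain ⟨l, _, hTl⟩ := this
    have := T65_ne_zero hTl
    simp only [coe_range, Set.mem_Iio]
    omega
  rw [finsum_congr hs]
  apply finsum_eq_finset_sum_of_support_subset
  intro n hn
  rw [Function.mem_support] at hn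
  have : ∃ s ∈ range (M+1), ∃ l ∈ range (M+1), T65 d n s l ≠ 0 := by
    by_contra hcon
    push_neg at hcon
    exact hn (Finset.sum_eq_zero (fun s hs' => Finset.sum_eq_zero (hcon s hs')))
  obtain ⟨s, _, l, _, hT⟩ := this
  have := T65_ne_zero hT
  simp only [coe_range, Set.mem_Iio]
  omega

lemma sum_ext_zero {β : Type*} [AddCommMonoid β] (A B : Finset ℕ) (g : ℕ → β)
    (hA : ∀ x, x ∉ A → g x = 0) (hB : ∀ x, x ∉ B → g x = 0) :
    ∑ x ∈ A, g x = ∑ x ∈ B, g x := by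
  rw [Finset.sum_subset (Finset.subset_union_left (s₂ := B)) (fun x _ hx => hA x hx),
    ← Finset.sum_subset (Finset.subset_union_right (s₁ := A)) (fun x _ hx => hB x hx)]

lemma triple_reindex (d e : Fin 3 →₀ ℕ) (K L : ℕ)
    (hK : e 1 + e 2 ≤ K) (hL : e 0 ≤ L) (hd : ∀ j, d j ≤ e j) :
    (∑ n ∈ range (d 0 + d 1 + d 2 + 1), ∑ s ∈ range (d 0 + d 1 + d 2 + 1),
        ∑ l ∈ range (d 0 + d 1 + d 2 + 1), T65 d n s l)
    = ∑ s ∈ range K, ∑ l ∈ Finset.Icc 1 L,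
        ∑ n ∈ range (d 0 + d 1 + d 2 + 1), T65 d n s l := by
  set M := d 0 + d 1 + d 2 with hM
  rw [Finset.sum_comm]
  have step1 : ∀ s, (∑ n ∈ range (M+1), ∑ l ∈ range (M+1), T65 d n s l)
      = ∑ l ∈ range (M+1), ∑ n ∈ range (M+1), T65 d n s l := fun s => Finset.sum_comm
  rw [Finset.sum_congr rfl (fun s _ => step1 s)]
  have houter : (∑ s ∈ range (M+1), ∑ l ∈ range (M+1), ∑ n ∈ range (M+1), T65 d n s l)
      = ∑ s ∈ range K, ∑ l ∈ range (M+1), ∑ n ∈ range (M+1), T65 d n s l := by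
    apply sum_ext_zero
    · intro s hs
      rw [mem_range, not_lt] at hs
      refine Finset.sum_eq_zero fun l _ => Finset.sum_eq_zero fun n _ => ?_
      by_contra hT
      have := T65_ne_zero hT
      omega
    · intro s hs
      rw [mem_range, not_lt] at hs
      refine Finset.sum_eq_zero fun l _ => Finset.sum_eq_zero fun n _ => ?_
      by_contra hT
      obtain ⟨hn, hl', hnd, hld, hsd, h2ns⟩ := T65_ne_zero hT
      have hns : s ≤ n * s := Nat.le_mul_of_pos_left s (by omega)
      have : 2*(n*s) + n ≤ e 1 + e 2 := le_trans h2ns (by have := hd 1; have := hd 2; omega)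
      omega
  rw [houter]
  refine Finset.sum_congr rfl fun s _ => ?_
  apply sum_ext_zero
  · intro l hl
    rw [mem_range, not_lt] at hl
    refine Finset.sum_eq_zero fun n _ => ?_
    by_contra hT
    have := T65_ne_zero hT
    omega
  · intro l hl
    rw [Finset.mem_Icc, not_and_or] at hl
    refine Finset.sum_eq_zero fun n _ => ?_
    by_contra hT
    obtain ⟨hn, hl', hnd, hld, hsd, h2ns⟩ := T65_ne_zero hT
    have := hd 0
    omega


lemma coeff_Skl_eq (d : Fin 3 →₀ ℕ) (s l : ℕ) (hl : 1 ≤ l) {M : ℕ} (hM : d 0 ≤ M) :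
    MvPowerSeries.coeff (R := Polynomial ℚ) d (Skl s l) =
      ∑ n ∈ Finset.range (M+1), T65 d n s l := by
  have hble : ∀ (a b : ℕ) (n : ℕ), d = n • deg3 l a b → n ≤ M := by
    intro a b n hdn
    have h0 : d 0 = n * l := by rw [hdn, smul_deg3, deg3_apply0]
    have : n ≤ n * l := Nat.le_mul_of_pos_right n (by omega)
    omega
  rw [Skl, map_add, map_add, map_nsmul, map_nsmul, map_nsmul,
    OnMul.coeff_eq_sum (hi1 l s) (OnMul_S1 (hi1 l s)) (hble (s+1) s),
    OnMul.coeff_eq_sum (hi2 l s) (OnMul_S1 (hi2 l s)) (hble s (s+1)),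
    OnMul.coeff_eq_sum (hi3 l s) (OnMul_S3 (hi3 l s)) (hble (s+1) (s+1)),
    Finset.smul_sum, Finset.smul_sum, Finset.smul_sum,
    ← Finset.sum_add_distrib, ← Finset.sum_add_distrib]
  exact Finset.sum_congr rfl fun n _ => (T65_pointwise d s l n hl).symm

lemma coeff_expArg_eq_F (e : Fin 3 →₀ ℕ) (K L : ℕ)
    (hK : e 1 + e 2 ≤ K) (hL : e 0 ≤ L) (d : Fin 3 →₀ ℕ) (hd : d ≤ e) :
    MvPowerSeries.coeff (R := Polynomial ℚ) d expArg65 =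
      MvPowerSeries.coeff (R := Polynomial ℚ) d
        (∑ k ∈ Finset.range K, ∑ l ∈ Finset.Icc 1 L, Skl k l) := by
  have hd' : ∀ j, d j ≤ e j := fun j => Finsupp.le_def.1 hd j
  rw [expArg65_coeff_eq, triple_reindex d e K L hK hL hd', map_sum]
  refine Finset.sum_congr rfl fun s _ => ?_
  rw [map_sum]
  refine Finset.sum_congr rfl fun l hlm => ?_
  rw [coeff_Skl_eq d s l (Finset.mem_Icc.1 hlm).1 (M := d 0 + d 1 + d 2) (by omega)]

/-- Theorem 6.5, equation (94): in `ℚ[a][[q, Q, Q_m]]`,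
`exp( Σ_{n≥1} qⁿ (1 − aⁿ)² (−Qⁿ − Q_mⁿ + 2(QQ_m)ⁿ) / (n (1 − (QQ_m)ⁿ)(1 − qⁿ)²) )`
equals the triple infinite product `∏_{k≥0} ∏_{l≥1} factor65 k l`, the product converging
coefficientwise: factors with `k` (resp. `l`) large compared to the `Q, Q_m`-degrees
(resp. the `q`-degree) of a monomial contribute trivially to its coefficient, so the
coefficient of any monomial equals its coefficient in any sufficiently large finite
truncation of the product. -/
theorem deformed_Z_product_form (e : Fin 3 →₀ ℕ) (K L : ℕ)
    (hK : e 1 + e 2 ≤ K) (hL : e 0 ≤ L) :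
    MvPowerSeries.coeff (R := Polynomial ℚ) e (expPS expArg65) =
      MvPowerSeries.coeff (R := Polynomial ℚ) e
        (∏ k ∈ Finset.range K, ∏ l ∈ Finset.Icc 1 L, factor65 k l) := by
  have h1 := coeff_expPS_congr (e := e)
    (f := expArg65) (g := ∑ k ∈ Finset.range K, ∑ l ∈ Finset.Icc 1 L, Skl k l)
    (fun d hd => coeff_expArg_eq_F e K L hK hL d hd)
  rw [h1]
  congr 1
  rw [expPS_sum _ _ (fun k _ => by
    rw [map_sum]; exact Finset.sum_eq_zero fun l _ => constantCoeff_Skl k l)]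
  refine Finset.prod_congr rfl fun k _ => ?_
  rw [expPS_sum _ _ (fun l _ => constantCoeff_Skl k l)]
  exact Finset.prod_congr rfl fun l _ => expPS_Skl k l
end
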